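/- Let F : ℝ^d → ℝ be differentiable, monotone, and continuous DR-submodular, and let u, x, x* ∈ ℝ^d satisfy u ≤ x and u ≤ x* coordinatewise. Then F(x*) − F(x) ≤ ⟨∇F(x), x* − u⟩. -/

import Mathlib

open InnerProductSpace

/-- derivative of `t ↦ F (p + t • v)`. -/
lemma line_hasDerivAt_aux {d : ℕ} (F : EuclideanSpace ℝ (Fin d) → ℝ)
    (hdiff : Differentiable ℝ F) (p v : EuclideanSpace ℝ (Fin d)) (t₀ : ℝ) :
    HasDerivAt (fun t : ℝ => F (p + t • v))
      (inner ℝ (gradient F (p + t₀ • v)) v) t₀ := by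
  have h2 : HasDerivAt (fun t : ℝ => p + t • v) v t₀ := by
    simpa using ((hasDerivAt_id t₀).smul_const v).const_add p
  have h1 := (hdiff (p + t₀ • v)).hasGradientAt.hasFDerivAt
  exact h1.comp_hasDerivAt t₀ h2

/-- a monotone real function has nonneg derivative. -/
lemma deriv_nonneg_aux {g : ℝ → ℝ} {a : ℝ} (hg : Monotone g)
    (h : HasDerivAt g a 0) : 0 ≤ a := by
  rw [hasDerivAt_iff_tendsto_slope] at h
  have h' : Filter.Tendsto (slope g 0) (nhdsWithin 0 (Set.Ioi 0)) (nhds a) :=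
    h.mono_left (nhdsWithin_mono _ (fun t ht => ne_of_gt ht))
  refine ge_of_tendsto h' ?_
  filter_upwards [self_mem_nhdsWithin] with t ht
  have ht' : (0:ℝ) < t := ht
  have : g 0 ≤ g t := hg ht'.le
  simp only [slope_def_field, div_eq_mul_inv]
  have : 0 ≤ g t - g 0 := by linarith
  rw [sub_zero]
  positivity

theorem monotone_DR_submodular_gradient_bound
    (d : ℕ) (F : EuclideanSpace ℝ (Fin d) → ℝ)
    (hdiff : Differentiable ℝ F)
    (hmono : ∀ x y : EuclideanSpace ℝ (Fin d), (∀ i, x i ≤ y i) → F x ≤ F y)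
    (hDR : ∀ x y : EuclideanSpace ℝ (Fin d), (∀ i, x i ≤ y i) →
      ∀ i, gradient F y i ≤ gradient F x i)
    (u x xstar : EuclideanSpace ℝ (Fin d))
    (hux : ∀ i, u i ≤ x i) (huxs : ∀ i, u i ≤ xstar i) :
    F xstar - F x ≤ inner ℝ (gradient F x) (xstar - u) := by
  -- gradient components are nonnegative
  have hgrad_nonneg : ∀ y : EuclideanSpace ℝ (Fin d), ∀ i, 0 ≤ gradient F y i := by
    intro y i
    set e : EuclideanSpace ℝ (Fin d) := EuclideanSpace.single i (1:ℝ) with he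
    have hmono' : Monotone (fun t : ℝ => F (y + t • e)) := by
      intro s t hst
      refine hmono _ _ fun j => ?_
      simp only [PiLp.add_apply, PiLp.smul_apply, smul_eq_mul, he,
        EuclideanSpace.single_apply]
      gcongr
    have hd := line_hasDerivAt_aux F hdiff y e 0
    rw [show y + (0:ℝ) • e = y by simp] at hd
    have h0 := deriv_nonneg_aux hmono' hd
    have : (inner ℝ (gradient F y) e : ℝ) = gradient F y i := by
      rw [he, EuclideanSpace.inner_single_right]; simp
    linarith [this ▸ h0]
  -- the direction v = (x ⊔ x*) - x
  set v : EuclideanSpace ℝ (Fin d) :=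
    (WithLp.equiv 2 (Fin d → ℝ)).symm (fun i => max (xstar i) (x i) - x i) with hv
  have hv_apply : ∀ i, v i = max (xstar i) (x i) - x i := fun i => rfl
  have hv_nonneg : ∀ i, 0 ≤ v i := fun i => by
    rw [hv_apply]; have := le_max_right (xstar i) (x i); linarith
  -- Step 1: F x* ≤ F (x + v)
  have step1 : F xstar ≤ F (x + v) := by
    refine hmono _ _ fun i => ?_
    simp only [PiLp.add_apply, hv_apply]
    have := le_max_left (xstar i) (x i); linarith
  -- Step 2: F (x + v) - F x ≤ ⟪∇F x, v⟫  via MVT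
  have step2 : F (x + v) - F x ≤ inner ℝ (gradient F x) v := by
    set g : ℝ → ℝ := fun t => F (x + t • v) with hg
    have hgd : ∀ t : ℝ, HasDerivAt g (inner ℝ (gradient F (x + t • v)) v) t :=
      fun t => line_hasDerivAt_aux F hdiff x v t
    obtain ⟨c, hc, hceq⟩ := exists_hasDerivAt_eq_slope g
      (fun t => inner ℝ (gradient F (x + t • v)) v) (zero_lt_one)
      (fun t _ => (hgd t).continuousAt.continuousWithinAt) (fun t _ => hgd t)
    have hslope : g 1 - g 0 = inner ℝ (gradient F (x + c • v)) v := by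
      rw [hceq]; ring
    have hg1 : g 1 = F (x + v) := by simp [hg]
    have hg0 : g 0 = F x := by simp [hg]
    -- gradient antitone step
    have hle : (inner ℝ (gradient F (x + c • v)) v : ℝ) ≤ inner ℝ (gradient F x) v := by
      simp only [PiLp.inner_apply, RCLike.inner_apply, conj_trivial]
      refine Finset.sum_le_sum fun i _ => ?_
      have hxc : ∀ j, x j ≤ (x + c • v) j := fun j => by
        simp only [PiLp.add_apply, PiLp.smul_apply, smul_eq_mul]
        nlinarith [hv_nonneg j, hc.1]
      exact mul_le_mul_of_nonneg_left (hDR x (x + c • v) hxc i) (hv_nonneg i)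
    calc F (x + v) - F x = g 1 - g 0 := by rw [hg1, hg0]
      _ = inner ℝ (gradient F (x + c • v)) v := hslope
      _ ≤ inner ℝ (gradient F x) v := hle
  -- Step 3: ⟪∇F x, v⟫ ≤ ⟪∇F x, x* - u⟫
  have step3 : (inner ℝ (gradient F x) v : ℝ) ≤ inner ℝ (gradient F x) (xstar - u) := by
    simp only [PiLp.inner_apply, RCLike.inner_apply, conj_trivial]
    refine Finset.sum_le_sum fun i _ => ?_
    have hvle : v i ≤ (xstar - u) i := by
      simp only [PiLp.sub_apply, hv_apply]
      rcases max_cases (xstar i) (x i) with ⟨h1, _⟩ | ⟨h1, _⟩ <;>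
        · rw [h1]; have := hux i; have := huxs i; linarith
    exact mul_le_mul_of_nonneg_right hvle (hgrad_nonneg x i)
  linarith
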